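/- Let n ≥ 5 and let A = 2^{1/n}·M, where M is the real n×n matrix with M_{ii} = 1 for 1 ≤ i ≤ n−1, M_{in} = 1/2 for 1 ≤ i ≤ n, and all other entries 0. Then the subgroup of ℤⁿ generated by the set S(A) of shortest vectors equals {v ∈ ℤⁿ : the last coordinate of v is even}; in particular this subgroup has index 2 in ℤⁿ, so S(A) generates a finite-index subgroup of ℤⁿ but does not generate ℤⁿ. -/

import Mathlib

/-- The Euclidean norm of a vector in `ℝⁿ`. -/
noncomputable def eNorm {n : ℕ} (x : Fin n → ℝ) : ℝ :=
  Real.sqrt (∑ i, (x i) ^ 2)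

/-- The Euclidean norm of `A v` for an integer vector `v`. -/
noncomputable def latNorm {n : ℕ} (A : Matrix (Fin n) (Fin n) ℝ) (v : Fin n → ℤ) : ℝ :=
  eNorm (A.mulVec (fun i => (v i : ℝ)))

/-- The systole of `A`: the infimum (in fact minimum) of `‖A v‖` over nonzero
integer vectors `v ∈ ℤⁿ`. -/
noncomputable def syst {n : ℕ} (A : Matrix (Fin n) (Fin n) ℝ) : ℝ :=
  sInf {r | ∃ v : Fin n → ℤ, v ≠ 0 ∧ r = latNorm A v}

/-- The matrix `M` with `M i i = 1` for `i` in the upper-left `(n-1) × (n-1)` block,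
last column constantly `1/2`, and all other entries `0`. -/
noncomputable def Mmat (n : ℕ) : Matrix (Fin n) (Fin n) ℝ :=
  Matrix.of fun i j => if (j : ℕ) = n - 1 then 1 / 2 else if i = j then 1 else 0

/-- The matrix `A = 2^(1/n) • M` (which has determinant `1`). -/
noncomputable def Amat (n : ℕ) : Matrix (Fin n) (Fin n) ℝ :=
  ((2 : ℝ) ^ ((1 : ℝ) / n)) • Mmat n

namespace AmatAux

open Finset

variable {n : ℕ}

/-- sum of squares of `M v` -/
noncomputable def sqn (n : ℕ) (v : Fin n → ℤ) : ℝ :=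
  ∑ j, ((Mmat n).mulVec (fun k => (v k : ℝ)) j) ^ 2

lemma mulVec_apply (h : n - 1 < n) (x : Fin n → ℝ) (i : Fin n) :
    (Mmat n).mulVec x i
      = (if (i : ℕ) = n - 1 then 0 else x i) + x ⟨n - 1, h⟩ / 2 := by
  classical
  set lst : Fin n := ⟨n - 1, h⟩ with hlst
  have hclst : (lst : ℕ) = n - 1 := rfl
  have key : ∀ j : Fin n,
      (Mmat n) i j * x j
        = (if (j : ℕ) = n - 1 then x lst / 2 else 0)
          + (if i = j then (if (i : ℕ) = n - 1 then 0 else x i) else 0) := by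
    intro j
    simp only [Mmat, Matrix.of_apply]
    by_cases h1 : (j : ℕ) = n - 1 <;> by_cases h2 : i = j
    · have hj : j = lst := Fin.ext h1
      subst h2; subst hj
      simp [hclst]
      ring
    · have hj : j = lst := Fin.ext h1
      subst hj
      simp [hclst, h2]
      ring
    · subst h2
      simp [h1]
    · simp [h1, h2]
  show ∑ j, (Mmat n) i j * x j = _
  rw [Finset.sum_congr rfl fun j _ => key j, Finset.sum_add_distrib]
  have hcond : ∀ j : Fin n, ((j : ℕ) = n - 1) = (j = lst) :=
    fun j => propext ⟨fun hj => Fin.ext hj, fun hj => by subst hj; rfl⟩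
  simp only [hcond]
  rw [Finset.sum_ite_eq' Finset.univ lst (fun _ => x lst / 2),
      Finset.sum_ite_eq Finset.univ i (fun _ => if i = lst then 0 else x i)]
  simp only [Finset.mem_univ, if_true, hcond]
  ring

lemma sqn_eq (h : n - 1 < n) (v : Fin n → ℤ) :
    sqn n v = ∑ i : Fin n, ((if (i : ℕ) = n - 1 then 0 else (v i : ℝ)) + (v ⟨n - 1, h⟩ : ℝ) / 2) ^ 2 := by
  unfold sqn
  exact Finset.sum_congr rfl fun j _ => by rw [mulVec_apply h]

lemma sqn_nonneg (v : Fin n → ℤ) : 0 ≤ sqn n v :=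
  Finset.sum_nonneg fun i _ => sq_nonneg _

lemma int_sq_ge {x : ℤ} (hx : x ≠ 0) : (1 : ℝ) ≤ (x : ℝ) ^ 2 := by
  have h1 : (1 : ℤ) ≤ |x| := Int.one_le_abs hx
  have h2 : (1 : ℤ) ≤ x ^ 2 := by nlinarith [sq_abs x, abs_nonneg x]
  exact_mod_cast h2

lemma sqn_odd (hn : 5 ≤ n) (v : Fin n → ℤ) (hodd : Odd (v ⟨n - 1, Nat.sub_lt (by omega) Nat.one_pos⟩)) :
    (n : ℝ) / 4 ≤ sqn n v := by
  have h : n - 1 < n := by omega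
  rw [sqn_eq h]
  set t : ℤ := v ⟨n - 1, h⟩ with ht
  have hoddt : Odd t := hodd
  have hterm : ∀ i : Fin n,
      (1 : ℝ) / 4 ≤ ((if (i : ℕ) = n - 1 then 0 else (v i : ℝ)) + (t : ℝ) / 2) ^ 2 := by
    intro i
    by_cases hi : (i : ℕ) = n - 1
    · rw [if_pos hi, zero_add]
      have h1 : t ≠ 0 := by
        obtain ⟨k, hk⟩ := hoddt; omega
      have h2 := int_sq_ge h1
      rw [div_pow]
      linarith
    · rw [if_neg hi]
      have h1 : 2 * v i + t ≠ 0 := by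
        obtain ⟨k, hk⟩ := hoddt; omega
      have h2 := int_sq_ge h1
      have h3 : ((v i : ℝ) + (t : ℝ) / 2) = ((2 * v i + t : ℤ) : ℝ) / 2 := by
        push_cast; ring
      rw [h3, div_pow]
      linarith
  calc (n : ℝ) / 4 = ∑ _i : Fin n, (1 : ℝ) / 4 := by
        rw [Finset.sum_const, Finset.card_univ, Fintype.card_fin, nsmul_eq_mul]; ring
    _ ≤ _ := Finset.sum_le_sum fun i _ => hterm i

lemma sqn_ge_one (hn : 5 ≤ n) (v : Fin n → ℤ) (hv : v ≠ 0) : 1 ≤ sqn n v := by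
  have h : n - 1 < n := by omega
  rcases Int.even_or_odd (v ⟨n - 1, h⟩) with he | ho
  · rcases eq_or_ne (v ⟨n - 1, h⟩) 0 with h0 | h0
    · obtain ⟨i, hi⟩ : ∃ i, v i ≠ 0 := by
        by_contra hc; push_neg at hc; exact hv (funext hc)
      have hilst : (i : ℕ) ≠ n - 1 := by
        intro hh
        exact hi (by rwa [show i = (⟨n - 1, h⟩ : Fin n) from Fin.ext hh])
      rw [sqn_eq h]
      refine le_trans ?_ (Finset.single_le_sum
        (f := fun j : Fin n =>
          ((if (j : ℕ) = n - 1 then 0 else (v j : ℝ)) + (v ⟨n - 1, h⟩ : ℝ) / 2) ^ 2)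
        (fun j _ => sq_nonneg _) (Finset.mem_univ i))
      simp only [if_neg hilst, h0]
      simpa using int_sq_ge hi
    · rw [sqn_eq h]
      refine le_trans ?_ (Finset.single_le_sum
        (f := fun j : Fin n =>
          ((if (j : ℕ) = n - 1 then 0 else (v j : ℝ)) + (v ⟨n - 1, h⟩ : ℝ) / 2) ^ 2)
        (fun j _ => sq_nonneg _) (Finset.mem_univ (⟨n - 1, h⟩ : Fin n)))
      show 1 ≤ ((if ((⟨n - 1, h⟩ : Fin n) : ℕ) = n - 1 then 0
        else ((v ⟨n - 1, h⟩ : ℤ) : ℝ)) + ((v ⟨n - 1, h⟩ : ℤ) : ℝ) / 2) ^ 2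
      rw [if_pos rfl, zero_add]
      obtain ⟨k, hk⟩ := he
      have hk0 : k ≠ 0 := by rintro rfl; exact h0 (by omega)
      have h2 := int_sq_ge hk0
      have h3 : ((v ⟨n - 1, h⟩ : ℤ) : ℝ) / 2 = (k : ℝ) := by rw [hk]; push_cast; ring
      rw [h3]; linarith
  · have h1 := sqn_odd hn v ho
    have h5 : (5 : ℝ) ≤ (n : ℝ) := by exact_mod_cast hn
    linarith

lemma sqn_single (hn : 5 ≤ n) (i : Fin n) (hi : (i : ℕ) ≠ n - 1) :
    sqn n (Pi.single i 1) = 1 := by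
  have h : n - 1 < n := by omega
  rw [sqn_eq h]
  have hlstne : (⟨n - 1, h⟩ : Fin n) ≠ i := fun hh => hi (by rw [← hh])
  have hlst : (Pi.single i (1 : ℤ) : Fin n → ℤ) ⟨n - 1, h⟩ = 0 := by
    simp [Pi.single_eq_of_ne hlstne]
  simp only [hlst, Int.cast_zero, zero_div, add_zero]
  have key : ∀ k : Fin n,
      (if (k : ℕ) = n - 1 then (0 : ℝ) else (((Pi.single i (1 : ℤ) : Fin n → ℤ) k : ℤ) : ℝ)) ^ 2
        = if k = i then 1 else 0 := by
    intro k
    by_cases hk : (k : ℕ) = n - 1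
    · rw [if_pos hk]
      have hki : k ≠ i := fun hh => hi (hh ▸ hk)
      rw [if_neg hki]
      norm_num
    · rw [if_neg hk]
      by_cases hki : k = i
      · subst hki; simp
      · rw [if_neg hki, Pi.single_eq_of_ne hki]
        norm_num
  rw [Finset.sum_congr rfl fun k _ => key k,
      Finset.sum_ite_eq' Finset.univ i fun _ => (1 : ℝ)]
  simp

/-- the special vector `(-1, …, -1, 2)` -/
def wvec (n : ℕ) : Fin n → ℤ := fun j => if (j : ℕ) = n - 1 then 2 else -1

lemma sqn_wvec (hn : 5 ≤ n) : sqn n (wvec n) = 1 := by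
  have h : n - 1 < n := by omega
  rw [sqn_eq h]
  have hlst : wvec n ⟨n - 1, h⟩ = 2 := by simp [wvec]
  rw [hlst]
  have key : ∀ k : Fin n,
      ((if (k : ℕ) = n - 1 then (0 : ℝ) else ((wvec n k : ℤ) : ℝ)) + ((2 : ℤ) : ℝ) / 2) ^ 2
        = if k = (⟨n - 1, h⟩ : Fin n) then 1 else 0 := by
    intro k
    by_cases hk : (k : ℕ) = n - 1
    · rw [if_pos hk, if_pos (Fin.ext hk)]
      norm_num
    · have : k ≠ (⟨n - 1, h⟩ : Fin n) := fun hh => hk (by rw [hh])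
      rw [if_neg hk, if_neg this]
      simp [wvec, hk]
  rw [Finset.sum_congr rfl fun k _ => key k,
      Finset.sum_ite_eq' Finset.univ (⟨n - 1, h⟩ : Fin n) fun _ => (1 : ℝ)]
  simp

lemma c_pos : (0 : ℝ) < (2 : ℝ) ^ ((1 : ℝ) / n) :=
  Real.rpow_pos_of_pos two_pos _

lemma latNorm_Amat (v : Fin n → ℤ) :
    latNorm (Amat n) v = (2 : ℝ) ^ ((1 : ℝ) / n) * Real.sqrt (sqn n v) := by
  unfold latNorm eNorm Amat
  rw [Matrix.smul_mulVec]
  simp only [Pi.smul_apply, smul_eq_mul, mul_pow]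
  rw [← Finset.mul_sum, Real.sqrt_mul (by positivity), Real.sqrt_sq (le_of_lt c_pos)]
  rfl

lemma single_ne_zero' (i : Fin n) : (Pi.single i 1 : Fin n → ℤ) ≠ 0 := by
  intro hh
  have := congrFun hh i
  simp at this

lemma latNorm_single (hn : 5 ≤ n) :
    latNorm (Amat n) (Pi.single (⟨0, by omega⟩ : Fin n) 1) = (2 : ℝ) ^ ((1 : ℝ) / n) := by
  rw [latNorm_Amat, sqn_single hn _ (by simp; omega), Real.sqrt_one, mul_one]

lemma latNorm_lb (hn : 5 ≤ n) (v : Fin n → ℤ) (hv : v ≠ 0) :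
    (2 : ℝ) ^ ((1 : ℝ) / n) ≤ latNorm (Amat n) v := by
  rw [latNorm_Amat]
  nth_rewrite 1 [← mul_one ((2 : ℝ) ^ ((1 : ℝ) / n))]
  have h1 : (1 : ℝ) ≤ Real.sqrt (sqn n v) := by
    rw [show (1 : ℝ) = Real.sqrt 1 from Real.sqrt_one.symm]
    exact Real.sqrt_le_sqrt (sqn_ge_one hn v hv)
  exact mul_le_mul_of_nonneg_left h1 (le_of_lt c_pos)

lemma syst_Amat (hn : 5 ≤ n) : syst (Amat n) = (2 : ℝ) ^ ((1 : ℝ) / n) := by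
  unfold syst
  have hmem : (2 : ℝ) ^ ((1 : ℝ) / n)
      ∈ {r | ∃ v : Fin n → ℤ, v ≠ 0 ∧ r = latNorm (Amat n) v} :=
    ⟨Pi.single (⟨0, by omega⟩ : Fin n) 1, single_ne_zero' _, (latNorm_single hn).symm⟩
  apply le_antisymm
  · exact csInf_le ⟨(2 : ℝ) ^ ((1 : ℝ) / n),
      fun r ⟨v, hv, hr⟩ => hr ▸ latNorm_lb hn v hv⟩ hmem
  · exact le_csInf ⟨_, hmem⟩ fun r ⟨v, hv, hr⟩ => hr ▸ latNorm_lb hn v hv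

lemma mem_S_iff (hn : 5 ≤ n) (v : Fin n → ℤ) :
    (v ≠ 0 ∧ latNorm (Amat n) v = syst (Amat n)) ↔ v ≠ 0 ∧ sqn n v = 1 := by
  rw [syst_Amat hn, latNorm_Amat]
  constructor
  · rintro ⟨hv, he⟩
    refine ⟨hv, ?_⟩
    have := mul_left_cancel₀ (ne_of_gt (c_pos (n := n))) (he.trans (mul_one _).symm)
    rwa [Real.sqrt_eq_one] at this
  · rintro ⟨hv, he⟩
    rw [he, Real.sqrt_one, mul_one]
    exact ⟨hv, rfl⟩

end AmatAux


/-- For `n ≥ 5` and `A = 2^(1/n) • M`, the subgroup of `ℤⁿ` generated by the set of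
shortest vectors of `A` is exactly the set of integer vectors whose last coordinate
is even; in particular it has index `2` in `ℤⁿ`, so it is of finite index but proper. -/
theorem closure_systoles_Amat {n : ℕ} (hn : 5 ≤ n) :
    (∀ v : Fin n → ℤ,
        v ∈ AddSubgroup.closure
            {w : Fin n → ℤ | w ≠ 0 ∧ latNorm (Amat n) w = syst (Amat n)} ↔
          Even (v ⟨n - 1, by omega⟩)) ∧
      (AddSubgroup.closure
          {w : Fin n → ℤ | w ≠ 0 ∧ latNorm (Amat n) w = syst (Amat n)}).index = 2 ∧
      AddSubgroup.closure
          {w : Fin n → ℤ | w ≠ 0 ∧ latNorm (Amat n) w = syst (Amat n)} ≠ ⊤ := by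
  classical
  have h : n - 1 < n := by omega
  set S : Set (Fin n → ℤ) := {w | w ≠ 0 ∧ latNorm (Amat n) w = syst (Amat n)} with hSdef
  have hSmem : ∀ w : Fin n → ℤ, w ∈ S ↔ w ≠ 0 ∧ AmatAux.sqn n w = 1 := fun w =>
    AmatAux.mem_S_iff hn w
  let ψ : (Fin n → ℤ) →+ ZMod 2 :=
    (Int.castAddHom (ZMod 2)).comp (Pi.evalAddMonoidHom (fun _ : Fin n => ℤ) ⟨n - 1, h⟩)
  have hker : ∀ v : Fin n → ℤ, ψ v = 0 ↔ Even (v ⟨n - 1, h⟩) := by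
    intro v
    show ((v ⟨n - 1, h⟩ : ℤ) : ZMod 2) = 0 ↔ _
    rw [ZMod.intCast_zmod_eq_zero_iff_dvd]
    constructor
    · rintro ⟨k, hk⟩; exact ⟨k, by omega⟩
    · rintro ⟨k, hk⟩; exact ⟨k, by omega⟩
  have hle : AddSubgroup.closure S ≤ ψ.ker := by
    rw [AddSubgroup.closure_le]
    intro w hw
    obtain ⟨hw0, hw1⟩ := (hSmem w).mp hw
    have heven : Even (w ⟨n - 1, h⟩) := by
      by_contra hodd
      rw [Int.not_even_iff_odd] at hodd
      have h1 := AmatAux.sqn_odd hn w hodd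
      have h5 : (5 : ℝ) ≤ (n : ℝ) := by exact_mod_cast hn
      rw [hw1] at h1
      linarith
    exact (hker w).mpr heven
  have hge : ∀ v : Fin n → ℤ, Even (v ⟨n - 1, h⟩) → v ∈ AddSubgroup.closure S := by
    rintro v ⟨m, hm⟩
    have hwS : AmatAux.wvec n ∈ S := (hSmem _).mpr
      ⟨fun hh => by
          have := congrFun hh ⟨n - 1, h⟩
          simp [AmatAux.wvec] at this,
        AmatAux.sqn_wvec hn⟩
    have hsingS : ∀ i : Fin n, (i : ℕ) ≠ n - 1 → (Pi.single i 1 : Fin n → ℤ) ∈ S := fun i hi =>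
      (hSmem _).mpr ⟨AmatAux.single_ne_zero' i, AmatAux.sqn_single hn i hi⟩
    have hrepr : v = m • AmatAux.wvec n
        + ∑ i ∈ Finset.univ.erase (⟨n - 1, h⟩ : Fin n),
            (v i + m) • (Pi.single i 1 : Fin n → ℤ) := by
      funext j
      simp only [Pi.add_apply, Pi.smul_apply, Finset.sum_apply, smul_eq_mul]
      have hterm : ∀ i ∈ Finset.univ.erase (⟨n - 1, h⟩ : Fin n),
          (v i + m) * (Pi.single i 1 : Fin n → ℤ) j
            = if j = i then v j + m else 0 := by
        intro i _
        by_cases hij : j = i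
        · subst hij; simp
        · simp [Pi.single_eq_of_ne hij, hij]
      rw [Finset.sum_congr rfl hterm,
        Finset.sum_ite_eq (Finset.univ.erase (⟨n - 1, h⟩ : Fin n)) j (fun _ => v j + m)]
      by_cases hj : j = (⟨n - 1, h⟩ : Fin n)
      · subst hj
        rw [if_neg (by simp)]
        simp only [AmatAux.wvec, if_true]
        omega
      · rw [if_pos (Finset.mem_erase.mpr ⟨hj, Finset.mem_univ j⟩)]
        simp only [AmatAux.wvec]
        rw [if_neg (fun hh => hj (Fin.ext hh))]
        ring
    rw [hrepr]
    exact AddSubgroup.add_mem _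
      (AddSubgroup.zsmul_mem _ (AddSubgroup.subset_closure hwS) m)
      (AddSubgroup.sum_mem _ fun i hi =>
        AddSubgroup.zsmul_mem _ (AddSubgroup.subset_closure (hsingS i
          (fun hh => (Finset.mem_erase.mp hi).1 (Fin.ext hh)))) _)
  have hclos : AddSubgroup.closure S = ψ.ker :=
    le_antisymm hle fun v hv => hge v ((hker v).mp hv)
  have hiff : ∀ v : Fin n → ℤ,
      v ∈ AddSubgroup.closure S ↔ Even (v ⟨n - 1, h⟩) := by
    intro v
    rw [hclos, AddMonoidHom.mem_ker, hker]
  refine ⟨fun v => hiff v, ?_, ?_⟩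
  · rw [hclos]
    have hsurj : Function.Surjective ψ := by
      intro y
      refine ⟨Pi.single ⟨n - 1, h⟩ (ZMod.cast y : ℤ), ?_⟩
      show ((Pi.single (⟨n - 1, h⟩ : Fin n) (ZMod.cast y : ℤ) : Fin n → ℤ) ⟨n - 1, h⟩ : ZMod 2) = y
      rw [Pi.single_eq_same]
      exact ZMod.intCast_zmod_cast y
    rw [AddSubgroup.index_ker, AddMonoidHom.range_eq_top.mpr hsurj]
    rw [show Nat.card (⊤ : AddSubgroup (ZMod 2)) = Nat.card (ZMod 2) from
      Nat.card_congr AddSubgroup.topEquiv.toEquiv, Nat.card_zmod]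
  · intro htop
    have h2 : Even ((Pi.single (⟨n - 1, h⟩ : Fin n) (1 : ℤ) : Fin n → ℤ) ⟨n - 1, h⟩) :=
      (hiff _).mp (htop ▸ AddSubgroup.mem_top _)
    rw [Pi.single_eq_same] at h2
    exact (by decide : ¬ Even (1 : ℤ)) h2
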